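/- Let σ be the q-shift y ↦ qy on F(y), where F has characteristic zero and q is neither zero nor a root of unity. Let K = u/v ∈ F(y) be σ-standard with gcd(u,v) = 1, i.e., σ-reduced and u(0)q^ℓ − v(0) ≠ 0 for every negative integer ℓ. If g ∈ F(y) and p := u·σ(g) − v·g is a polynomial in F[y], then g ∈ F[y]. -/

import Mathlib

open Polynomial

theorem coeff_aeval_qX (F : Type*) [Field F] (q : F)
    (f : Polynomial F) (n : ℕ) : ((aeval (C q * X)) f).coeff n = q ^ n * f.coeff n := by
  induction f using Polynomial.induction_on' with
  | add p r hp hr => simp [hp, hr, mul_add]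
  | monomial i a =>
    rw [aeval_monomial, mul_pow, ← C_pow, algebraMap_eq]
    rw [show C a * (C (q^i) * X^i) = C (a * q^i) * X^i by rw [C_mul]; ring]
    simp only [coeff_monomial, coeff_C_mul, coeff_X_pow]
    by_cases h : n = i
    · subst h; simp; ring
    · simp [h, Ne.symm h]

theorem coeff_tau (F : Type*) [Field F] (q : F)
    (τ : Polynomial F ≃ₐ[F] Polynomial F)
    (hτ : τ Polynomial.X = Polynomial.C q * Polynomial.X)
    (f : Polynomial F) (n : ℕ) : (τ f).coeff n = q ^ n * f.coeff n := by
  have hh : (τ : Polynomial F →ₐ[F] Polynomial F) = aeval (C q * X) := by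
    apply Polynomial.algHom_ext; simp [hτ]
  have : τ f = aeval (C q * X) f := by rw [← hh]; rfl
  rw [this, coeff_aeval_qX]

theorem coeff_tau_zpow (F : Type*) [Field F] (q : F) (hq0 : q ≠ 0)
    (τ : Polynomial F ≃ₐ[F] Polynomial F)
    (hτ : τ Polynomial.X = Polynomial.C q * Polynomial.X)
    (m : ℤ) (f : Polynomial F) (n : ℕ) :
    ((τ ^ m) f).coeff n = q ^ (m * n) * f.coeff n := by
  have hτinv : τ⁻¹ X = C q⁻¹ * X := by
    apply τ.injective
    rw [show τ (τ⁻¹ X) = X from τ.apply_symm_apply X, map_mul, hτ]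
    have hc : τ (C q⁻¹) = C q⁻¹ := by
      rw [← Polynomial.algebraMap_eq]; exact τ.commutes _
    rw [hc, ← mul_assoc, ← C_mul, inv_mul_cancel₀ hq0, C_1, one_mul]
  have base : ∀ f : Polynomial F, ∀ n : ℕ, (τ⁻¹ f).coeff n = q⁻¹ ^ n * f.coeff n :=
    fun f n => coeff_tau F q⁻¹ τ⁻¹ hτinv f n
  induction m using Int.induction_on generalizing f with
  | zero => simp
  | succ k ih =>
    have h1 : (τ ^ ((k : ℤ) + 1)) f = (τ ^ (k : ℤ)) (τ f) := by
      rw [zpow_add_one]; rfl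
    rw [h1, ih (τ f), coeff_tau F q τ hτ, ← mul_assoc]
    rw [show ((k : ℤ) + 1) * (n : ℤ) = (k : ℤ) * n + (n : ℤ) by ring, zpow_add₀ hq0]
    norm_num
  | pred k ih =>
    have h1 : (τ ^ (-(k : ℤ) - 1)) f = (τ ^ (-(k : ℤ))) (τ⁻¹ f) := by
      rw [sub_eq_add_neg, zpow_add, zpow_neg_one]; rfl
    rw [h1, ih (τ⁻¹ f), base, ← mul_assoc]
    rw [show (-(k : ℤ) - 1) * (n : ℤ) = (-(k:ℤ)) * n + (-(n : ℤ)) by ring, zpow_add₀ hq0]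
    rw [zpow_neg]
    norm_num [inv_pow]

theorem zpow_eq_one_imp (F : Type*) [Field F] (q : F) (hq0 : q ≠ 0)
    (hqu : ∀ n : ℕ, 0 < n → q ^ n ≠ 1) (t : ℤ) (h : q ^ t = 1) : t = 0 := by
  rcases t with n | n
  · rcases Nat.eq_zero_or_pos n with h0 | h0
    · simp [h0]
    · exact absurd (by rwa [show (Int.ofNat n) = (n:ℤ) from rfl, zpow_natCast] at h)
        (hqu n h0)
  · exfalso
    apply hqu (n+1) (Nat.succ_pos n)
    rw [zpow_negSucc] at h
    rw [← inv_inv (q ^ (n+1)), h, inv_one]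

theorem free_orbit (F : Type*) [Field F] (q : F) (hq0 : q ≠ 0)
    (hqu : ∀ n : ℕ, 0 < n → q ^ n ≠ 1)
    (τ : Polynomial F ≃ₐ[F] Polynomial F)
    (hτ : τ Polynomial.X = Polynomial.C q * Polynomial.X)
    (w : Polynomial F) (hw : Prime w) (hwx : ¬ w ∣ X)
    (m : ℤ) (h : Associated ((τ ^ m) w) w) : m = 0 := by
  obtain ⟨c, hc⟩ := h
  obtain ⟨r, hru, hrc⟩ := Polynomial.isUnit_iff.mp c.isUnit
  have hr0 : r ≠ 0 := hru.ne_zero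
  set n := w.natDegree with hn
  have hw0 : w ≠ 0 := hw.ne_zero
  have hwn : w.coeff n ≠ 0 := by
    rw [hn, ← leadingCoeff]; exact leadingCoeff_ne_zero.mpr hw0
  -- key coefficient identity
  have hkey : ∀ j : ℕ, q ^ (m * j) * w.coeff j * r = w.coeff j := by
    intro j
    have := congrArg (fun f => Polynomial.coeff f j) hc
    simp only [← hrc, Polynomial.coeff_mul_C,
      coeff_tau_zpow F q hq0 τ hτ m w j] at this
    exact this
  -- there is another nonzero coefficient
  have hex : ∃ i, i ≠ n ∧ w.coeff i ≠ 0 := by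
    by_contra hno
    push_neg at hno
    have hwX : w = C (w.coeff n) * X ^ n := by
      ext j
      rcases eq_or_ne j n with rfl | hj
      · simp
      · simp [coeff_C_mul, coeff_X_pow, hj, hno j hj]
    apply hwx
    apply hw.dvd_of_dvd_pow (n := n)
    refine ⟨C (w.coeff n)⁻¹, ?_⟩
    nth_rewrite 1 [hwX]
    rw [mul_right_comm, ← C_mul, mul_inv_cancel₀ hwn, C_1, one_mul]
  obtain ⟨i, hin, hwi⟩ := hex
  have h1 : q ^ (m * (n:ℕ)) * r = 1 := by
    apply mul_right_cancel₀ hwn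
    linear_combination hkey n
  have h2 : q ^ (m * (i:ℕ)) * r = 1 := by
    apply mul_right_cancel₀ hwi
    linear_combination hkey i
  have h3 : q ^ (m * (n:ℕ) - m * (i:ℕ)) = 1 := by
    rw [zpow_sub₀ hq0]
    rw [div_eq_one_iff_eq (zpow_ne_zero _ hq0)]
    apply mul_right_cancel₀ hr0
    rw [h1, h2]
  have h4 := zpow_eq_one_imp F q hq0 hqu _ h3
  have h5 : m * ((n:ℤ) - (i:ℤ)) = 0 := by linear_combination h4
  rcases mul_eq_zero.mp h5 with h6 | h6
  · exact h6
  · exfalso; apply hin; omega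
set_option maxHeartbeats 1000000 in
/-- q-shift case: if `K = u/v` is σ-standard and `u·σ(g) − v·g` is a polynomial
for some rational function `g`, then `g` is a polynomial. -/
theorem stmt13 (F : Type*) [Field F] [CharZero F] (q : F) (hq0 : q ≠ 0)
    (hqu : ∀ n : ℕ, 0 < n → q ^ n ≠ 1)
    (τ : Polynomial F ≃ₐ[F] Polynomial F)
    (hτ : τ Polynomial.X = Polynomial.C q * Polynomial.X)
    (σ : RatFunc F ≃ₐ[F] RatFunc F)
    (hcompat : ∀ p : Polynomial F,
      σ (algebraMap (Polynomial F) (RatFunc F) p) =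
        algebraMap (Polynomial F) (RatFunc F) (τ p))
    (u v : Polynomial F) (hv : v ≠ 0) (hcop : IsCoprime u v)
    (hred : ∀ ℓ : ℤ, ℓ ≠ 0 → IsCoprime u ((τ ^ ℓ) v))
    (hstd : ∀ ℓ : ℤ, ℓ < 0 → u.eval 0 * q ^ ℓ ≠ v.eval 0)
    (g : RatFunc F) (p : Polynomial F)
    (hp : algebraMap (Polynomial F) (RatFunc F) u * σ g -
        algebraMap (Polynomial F) (RatFunc F) v * g =
      algebraMap (Polynomial F) (RatFunc F) p) :
    ∃ g' : Polynomial F, g = algebraMap (Polynomial F) (RatFunc F) g' := by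
  classical
  set a := g.num with ha
  set b := g.denom with hb
  have hb0 : b ≠ 0 := g.denom_ne_zero
  have hab : IsCoprime a b := g.isCoprime_num_denom
  have hg : g = algebraMap (Polynomial F) (RatFunc F) a / algebraMap (Polynomial F) (RatFunc F) b :=
    (g.num_div_denom).symm
  have hσg : σ g = algebraMap (Polynomial F) (RatFunc F) (τ a) /
      algebraMap (Polynomial F) (RatFunc F) (τ b) := by
    rw [hg, map_div₀, hcompat, hcompat]
  have hτb0 : τ b ≠ 0 := fun h => hb0 (by simpa using τ.injective (h.trans (map_zero τ).symm))
  have hbe : algebraMap (Polynomial F) (RatFunc F) b ≠ 0 := by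
    simpa using RatFunc.algebraMap_ne_zero hb0
  have hτbe : algebraMap (Polynomial F) (RatFunc F) (τ b) ≠ 0 :=
    RatFunc.algebraMap_ne_zero hτb0
  have key : u * τ a * b - v * (a * τ b) = p * (b * τ b) := by
    apply IsFractionRing.injective (Polynomial F) (RatFunc F)
    rw [hσg, hg] at hp
    field_simp at hp
    simp only [map_sub, map_mul]
    linear_combination hp
  -- divisibilities
  have hdvd1 : b ∣ v * τ b := by
    have h2 : b ∣ (v * τ b) * a := by
      exact ⟨u * τ a - p * τ b, by linear_combination -key⟩
    exact hab.symm.dvd_of_dvd_mul_right h2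
  have hτab : IsCoprime (τ a) (τ b) := hab.map (τ : Polynomial F →+* Polynomial F)
  have hdvd2 : τ b ∣ u * b := by
    have h2 : τ b ∣ (u * b) * τ a := by
      exact ⟨p * b + v * a, by linear_combination key⟩
    exact hτab.symm.dvd_of_dvd_mul_right h2
  -- main case split
  by_cases hbu : IsUnit b
  · have hb1 : b = 1 := (RatFunc.monic_denom g).eq_one_of_isUnit hbu
    exact ⟨a, by rw [hg, hb1, map_one, div_one]⟩
  exfalso
  by_cases hall : ∀ w' : Polynomial F, Prime w' → w' ∣ b → w' ∣ Polynomial.X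
  · -- Case B : b = unit * X^k
    set k := Polynomial.rootMultiplicity 0 b with hk
    set c := b /ₘ (Polynomial.X - Polynomial.C 0) ^ k with hc
    have hXk : (Polynomial.X - Polynomial.C 0) ^ k * c = b :=
      Polynomial.pow_mul_divByMonic_rootMultiplicity_eq b 0
    rw [Polynomial.C_0, sub_zero] at hXk
    have hc0 : c.eval 0 ≠ 0 := Polynomial.eval_divByMonic_pow_rootMultiplicity_ne_zero 0 hb0
    have hcu : IsUnit c := by
      by_contra hcu
      have hcne : c ≠ 0 := fun h => hc0 (by simp [h])
      obtain ⟨w', hw'irr, hw'c⟩ := WfDvdMonoid.exists_irreducible_factor hcu hcne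
      have hw'b : w' ∣ b := hw'c.trans ⟨Polynomial.X ^ k, by rw [← hXk]; ring⟩
      have hw'X : w' ∣ Polynomial.X := hall w' hw'irr.prime hw'b
      have hXc : Polynomial.X ∣ c := by
        obtain ⟨d, hd⟩ := hw'X
        rcases (Polynomial.irreducible_X (R := F)).isUnit_or_isUnit hd with h1 | h1
        · exact absurd h1 hw'irr.not_isUnit
        · obtain ⟨dd, hdd⟩ := h1.exists_right_inv
          exact dvd_trans ⟨dd, by rw [hd, mul_assoc, hdd, mul_one]⟩ hw'c
      rw [Polynomial.X_dvd_iff, Polynomial.coeff_zero_eq_eval_zero] at hXc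
      exact hc0 hXc
    have hk1 : 1 ≤ k := by
      by_contra hk1
      have : k = 0 := by omega
      rw [this, pow_zero, one_mul] at hXk
      exact hbu (hXk ▸ hcu)
    obtain ⟨c₀, hc₀u, hc₀⟩ := Polynomial.isUnit_iff.mp hcu
    have hc₀0 : c₀ ≠ 0 := hc₀u.ne_zero
    have hbeq : b = Polynomial.X ^ k * Polynomial.C c₀ := by rw [← hXk, hc₀]
    -- τ b
    have hτX : ∀ j : ℕ, τ (Polynomial.X ^ j) = Polynomial.C (q ^ j) * Polynomial.X ^ j := by
      intro j
      rw [map_pow, hτ, mul_pow, ← Polynomial.C_pow]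
    have hτC : ∀ x : F, τ (Polynomial.C x) = Polynomial.C x := by
      intro x
      rw [← Polynomial.algebraMap_eq]
      exact τ.commutes x
    have hτbeq : τ b = Polynomial.C (q ^ k) * Polynomial.X ^ k * Polynomial.C c₀ := by
      rw [hbeq, map_mul, hτX, hτC]
    -- cancel X^k in key
    have hXne : (Polynomial.X : Polynomial F) ^ k ≠ 0 :=
      pow_ne_zero _ Polynomial.X_ne_zero
    have key2 : u * τ a * Polynomial.C c₀ -
        v * a * Polynomial.C (q ^ k) * Polynomial.C c₀ =
        p * (Polynomial.X ^ k * (Polynomial.C c₀ * Polynomial.C (q ^ k) * Polynomial.C c₀)) := by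
      apply mul_left_cancel₀ hXne
      rw [hτbeq, hbeq] at key
      linear_combination key
    have heval := congrArg (Polynomial.eval 0) key2
    have hτa0 : (τ a).eval 0 = a.eval 0 := by
      rw [← Polynomial.coeff_zero_eq_eval_zero, ← Polynomial.coeff_zero_eq_eval_zero,
        coeff_tau F q τ hτ a 0, pow_zero, one_mul]
    have hXk0 : (Polynomial.X ^ k : Polynomial F).eval 0 = 0 := by
      rw [Polynomial.eval_pow, Polynomial.eval_X, zero_pow (by omega)]
    simp only [Polynomial.eval_sub, Polynomial.eval_mul, Polynomial.eval_C, hτa0, hXk0,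
      zero_mul, mul_zero] at heval
    -- a (0) ≠ 0
    have ha0 : a.eval 0 ≠ 0 := by
      intro h
      have hXa : Polynomial.X ∣ a := by
        rw [Polynomial.X_dvd_iff, Polynomial.coeff_zero_eq_eval_zero]; exact h
      have hXb : Polynomial.X ∣ b := by
        rw [hbeq]; exact Dvd.dvd.mul_right (dvd_pow_self _ (by omega)) _
      exact Polynomial.not_isUnit_X (hab.isUnit_of_dvd' hXa hXb)
    have hkey3 : u.eval 0 = q ^ k * v.eval 0 := by
      have := heval
      field_simp at this
      -- this : u.eval 0 * a.eval 0 * c₀ = v.eval 0 * a.eval 0 * q^k * c₀ or similar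
      apply mul_right_cancel₀ ha0
      apply mul_right_cancel₀ hc₀0
      linear_combination this
    apply hstd (-(k : ℤ)) (by omega)
    rw [hkey3, zpow_neg, zpow_natCast]
    field_simp
  · -- Case A : some prime factor not dividing X
    push_neg at hall
    obtain ⟨w, hwp, hwb, hwx⟩ := hall
    set S : Set ℤ := {m | (τ ^ m) w ∣ b} with hS
    have hS0 : (0 : ℤ) ∈ S := by simpa [hS] using hwb
    have happ : ∀ m m' : ℤ, ∀ f : Polynomial F, (τ ^ (m + m')) f = (τ ^ m) ((τ ^ m') f) := by
      intro m m' f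
      rw [zpow_add]; rfl
    have hmapdvd : ∀ m : ℤ, ∀ x y : Polynomial F, x ∣ y → (τ ^ m) x ∣ (τ ^ m) y := by
      intro m x y hxy
      obtain ⟨d, rfl⟩ := hxy
      exact ⟨(τ ^ m) d, map_mul (τ ^ m) x d⟩
    have hprime : ∀ m : ℤ, Prime ((τ ^ m) w) := fun m =>
      (MulEquiv.prime_iff (e := (τ ^ m).toRingEquiv.toMulEquiv)).mpr hwp
    have hassoc : ∀ m m' : ℤ, Associated ((τ ^ m) w) ((τ ^ m') w) → m = m' := by
      intro m m' h
      have h2 : Associated ((τ ^ (m - m')) w) w := by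
        have hd1 : (τ ^ (m - m')) w ∣ w := by
          have := hmapdvd (-m') _ _ h.dvd
          rwa [← happ, ← happ, show -m' + m = m - m' by ring, show -m' + m' = 0 by ring,
            zpow_zero] at this
        have hd2 : w ∣ (τ ^ (m - m')) w := by
          have := hmapdvd (-m') _ _ h.symm.dvd
          rwa [← happ, ← happ, show -m' + m = m - m' by ring, show -m' + m' = 0 by ring,
            zpow_zero] at this
        exact associated_of_dvd_dvd hd1 hd2
      have := free_orbit F q hq0 hqu τ hτ w hwp hwx (m - m') h2
      omega
    -- S is finite
    haveI hfinS : Finite ↥S := by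
      have hex : ∀ m : ↥S, ∃ f ∈ UniqueFactorizationMonoid.normalizedFactors b,
          Associated ((τ ^ (m : ℤ)) w) f :=
        fun m => UniqueFactorizationMonoid.exists_mem_normalizedFactors_of_dvd hb0
          (hprime (m : ℤ)).irreducible m.2
      choose φ hφmem hφass using hex
      have hinj : Function.Injective
          (fun m : ↥S => (⟨φ m, Multiset.mem_toFinset.mpr (hφmem m)⟩ :
            {x // x ∈ (UniqueFactorizationMonoid.normalizedFactors b).toFinset})) := by
        intro m m' hmm
        have : φ m = φ m' := congrArg Subtype.val hmm
        have hA : Associated ((τ ^ (m : ℤ)) w) ((τ ^ ((m' : ℤ))) w) :=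
          (hφass m).trans (this ▸ (hφass m').symm)
        exact Subtype.ext (hassoc _ _ hA)
      exact Finite.of_injective _ hinj
    have hfin : S.Finite := Set.toFinite S
    obtain ⟨M, hM, hMmax⟩ := Set.exists_max_image S id hfin ⟨0, hS0⟩
    obtain ⟨N, hN, hNmin⟩ := Set.exists_min_image S id hfin ⟨0, hS0⟩
    -- τ^(M+1) w ∣ u
    have hu : (τ ^ (M + 1)) w ∣ u := by
      have h1 : (τ ^ (M + 1)) w ∣ τ b := by
        have := hmapdvd 1 _ _ (hM : (τ ^ M) w ∣ b)
        rwa [← happ, add_comm, show ((τ ^ (1:ℤ)) b) = τ b by rw [zpow_one]] at this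
      have h2 : (τ ^ (M + 1)) w ∣ u * b := h1.trans hdvd2
      rcases (hprime (M + 1)).dvd_mul.mp h2 with h3 | h3
      · exact h3
      · exact absurd (hMmax (M + 1) h3) (by simp)
    -- τ^N w ∣ v
    have hvv : (τ ^ N) w ∣ v := by
      have h2 : (τ ^ N) w ∣ v * τ b := (hN : (τ ^ N) w ∣ b).trans hdvd1
      rcases (hprime N).dvd_mul.mp h2 with h3 | h3
      · exact h3
      · exfalso
        have h4 : (τ ^ (N - 1)) w ∣ b := by
          have := hmapdvd (-1) _ _ h3
          rwa [← happ, show (-1 : ℤ) + N = N - 1 by ring,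
            show ((τ ^ (-1:ℤ)) (τ b)) = b by
              rw [zpow_neg_one, ← AlgEquiv.mul_apply, inv_mul_cancel, AlgEquiv.one_apply]]
            at this
        exact absurd (hNmin (N - 1) h4) (by simp)
    -- contradiction with hred
    have hMN : N ≤ M := hMmax N hN
    set ℓ := M + 1 - N with hℓ
    have hℓ0 : ℓ ≠ 0 := by omega
    have hvv2 : (τ ^ (M + 1)) w ∣ (τ ^ ℓ) v := by
      have := hmapdvd ℓ _ _ hvv
      rwa [← happ, show ℓ + N = M + 1 by omega] at this
    exact (hprime (M + 1)).not_unit ((hred ℓ hℓ0).isUnit_of_dvd' hu hvv2)
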